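/- arXiv:1708.07064 — 3 statements merged into one kernel-verified Lean document; each statement's English description precedes it below -/
import Mathlib

section
/- Let α > 1 and β > 0 satisfy β² < 2√α − 1. Define h(x) = 2√α·x − x^{3/2} − β²/√x for x ∈ (0,1] and g(x) = (√α − √x)²/(β² − x²) for x ∈ (0, 1 ∧ β). Then: (i) h is strictly increasing on (0,1] with inf_{x∈(0,1]} h'(x) ≥ 2√α − 3/2 > 0; (ii) there exists a unique x* ∈ (0, 1 ∧ β) with h(x*) = 0, and g is decreasing on (0, x*) and increasing on (x*, 1 ∧ β); (iii) x* satisfies β^{4/3}/(2^{2/3}α^{1/3}) < x* < β^{4/3}/(2^{2/3}α^{1/3}) + β²/(2√α·(2√α − 3/2)). -/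
open Real Set

noncomputable section


private lemma mlmc_hasDerivAt_h (α β x : ℝ) (hx : 0 < x) :
    HasDerivAt (fun x => 2 * Real.sqrt α * x - x * Real.sqrt x - β ^ 2 / Real.sqrt x)
      (2 * Real.sqrt α - 3/2 * Real.sqrt x + β^2/(2 * x * Real.sqrt x)) x := by
  have hsx : 0 < Real.sqrt x := Real.sqrt_pos.2 hx
  have h1 : HasDerivAt Real.sqrt (1/(2*Real.sqrt x)) x := Real.hasDerivAt_sqrt hx.ne'
  have h2 : HasDerivAt (fun x => x * Real.sqrt x) (1 * Real.sqrt x + x * (1/(2*Real.sqrt x))) x :=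
    (hasDerivAt_id x).mul h1
  have h3 : HasDerivAt (fun x => β^2 / Real.sqrt x)
      ((0 * Real.sqrt x - β^2 * (1/(2*Real.sqrt x)))/(Real.sqrt x)^2) x :=
    (hasDerivAt_const x _).div h1 hsx.ne'
  have h4 : HasDerivAt (fun x : ℝ => 2 * Real.sqrt α * x) (2 * Real.sqrt α * 1) x :=
    (hasDerivAt_id x).const_mul _
  have h5 := (h4.fun_sub h2).fun_sub h3
  refine h5.congr_deriv ?_
  have hxx : Real.sqrt x * Real.sqrt x = x := Real.mul_self_sqrt hx.le
  set s := Real.sqrt x with hsdef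
  field_simp
  rw [← hxx]
  ring

private lemma mlmc_hasDerivAt_g (α β x : ℝ) (hx : 0 < x) (hxβ : x < β) :
    HasDerivAt (fun x => (Real.sqrt α - Real.sqrt x) ^ 2 / (β ^ 2 - x ^ 2))
      ((Real.sqrt α - Real.sqrt x) * (2 * Real.sqrt α * x - x * Real.sqrt x - β ^ 2 / Real.sqrt x)
        / (β ^ 2 - x ^ 2) ^ 2) x := by
  have hsx : 0 < Real.sqrt x := Real.sqrt_pos.2 hx
  have hD : β ^ 2 - x ^ 2 ≠ 0 := by nlinarith
  have h1 : HasDerivAt Real.sqrt (1/(2*Real.sqrt x)) x := Real.hasDerivAt_sqrt hx.ne'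
  have hu : HasDerivAt (fun x => Real.sqrt α - Real.sqrt x) (0 - 1/(2*Real.sqrt x)) x :=
    (hasDerivAt_const x _).sub h1
  have hN : HasDerivAt (fun x => (Real.sqrt α - Real.sqrt x) ^ 2)
      (2 * (Real.sqrt α - Real.sqrt x) ^ 1 * (0 - 1/(2*Real.sqrt x))) x := by
    simpa using hu.fun_pow 2
  have hDd : HasDerivAt (fun x : ℝ => β ^ 2 - x ^ 2) (0 - 2 * x ^ 1) x := by
    simpa using (hasDerivAt_const x (β^2)).fun_sub (hasDerivAt_pow 2 x)
  have h5 := hN.fun_div hDd hD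
  refine h5.congr_deriv ?_
  have hxx : Real.sqrt x * Real.sqrt x = x := Real.mul_self_sqrt hx.le
  set s := Real.sqrt x with hsdef
  field_simp
  rw [← hxx]
  ring

set_option maxHeartbeats 1000000 in
/-- the real-analysis lemma behind the optimization of the MLMC parameters.
For `α > 1` and `0 < β` with `β² < 2√α − 1`, set `h(x) = 2√α x − x^{3/2} − β²/√x` and
`g(x) = (√α − √x)²/(β² − x²)`. Then (i) `h` is strictly increasing on `(0,1]` with derivative
bounded below by `2√α − 3/2 > 0`; (ii) there is a unique root `x* ∈ (0, 1 ∧ β)` of `h`, and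
`g` decreases on `(0, x*]` and increases on `[x*, 1 ∧ β)`; (iii)
`β^{4/3}/(2^{2/3}α^{1/3}) < x* < β^{4/3}/(2^{2/3}α^{1/3}) + β²/(2√α(2√α − 3/2))`. -/
theorem mlmc_cost_optimization_lemma
    (α β : ℝ) (hα : 1 < α) (hβ : 0 < β) (hβα : β ^ 2 < 2 * Real.sqrt α - 1)
    (h g : ℝ → ℝ)
    (hh : h = fun x => 2 * Real.sqrt α * x - x * Real.sqrt x - β ^ 2 / Real.sqrt x)
    (hg : g = fun x => (Real.sqrt α - Real.sqrt x) ^ 2 / (β ^ 2 - x ^ 2)) :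
    -- (i)
    (StrictMonoOn h (Set.Ioc 0 1) ∧
      (∀ x ∈ Set.Ioc (0:ℝ) 1, DifferentiableAt ℝ h x ∧
        2 * Real.sqrt α - 3 / 2 ≤ deriv h x) ∧
      0 < 2 * Real.sqrt α - 3 / 2) ∧
    -- (ii) and (iii)
    ∃ xs : ℝ, xs ∈ Set.Ioo 0 (min 1 β) ∧ h xs = 0 ∧
      (∀ y ∈ Set.Ioo (0:ℝ) (min 1 β), h y = 0 → y = xs) ∧
      StrictAntiOn g (Set.Ioc 0 xs) ∧
      StrictMonoOn g (Set.Ico xs (min 1 β)) ∧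
      β ^ ((4:ℝ)/3) / (2 ^ ((2:ℝ)/3) * α ^ ((1:ℝ)/3)) < xs ∧
      xs < β ^ ((4:ℝ)/3) / (2 ^ ((2:ℝ)/3) * α ^ ((1:ℝ)/3))
            + β ^ 2 / (2 * Real.sqrt α * (2 * Real.sqrt α - 3 / 2)) := by
  subst hh hg
  have hα0 : (0:ℝ) < α := by linarith
  have hsα : 0 < Real.sqrt α := Real.sqrt_pos.2 hα0
  have hsα1 : 1 < Real.sqrt α := by
    have := Real.sqrt_lt_sqrt (by norm_num) hα
    simpa [Real.sqrt_one] using this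
  have hD0 : 0 < 2 * Real.sqrt α - 3 / 2 := by linarith
  set h : ℝ → ℝ := fun x => 2 * Real.sqrt α * x - x * Real.sqrt x - β ^ 2 / Real.sqrt x with hhdef
  set g : ℝ → ℝ := fun x => (Real.sqrt α - Real.sqrt x) ^ 2 / (β ^ 2 - x ^ 2) with hgdef
  have hd : ∀ x : ℝ, 0 < x → HasDerivAt h
      (2 * Real.sqrt α - 3/2 * Real.sqrt x + β^2/(2 * x * Real.sqrt x)) x :=
    fun x hx => mlmc_hasDerivAt_h α β x hx
  -- lower bound for the derivative of h on (0,1]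
  have hdlb : ∀ x : ℝ, 0 < x → x ≤ 1 →
      2 * Real.sqrt α - 3 / 2 ≤ 2 * Real.sqrt α - 3/2 * Real.sqrt x + β^2/(2 * x * Real.sqrt x) := by
    intro x hx hx1
    have h1 : Real.sqrt x ≤ 1 := by
      rw [show (1:ℝ) = Real.sqrt 1 by simp]
      exact Real.sqrt_le_sqrt hx1
    have h2 : 0 ≤ β^2/(2 * x * Real.sqrt x) := by positivity
    nlinarith
  have hdpos : ∀ x : ℝ, 0 < x → x ≤ 1 →
      0 < 2 * Real.sqrt α - 3/2 * Real.sqrt x + β^2/(2 * x * Real.sqrt x) :=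
    fun x hx hx1 => lt_of_lt_of_le hD0 (hdlb x hx hx1)
  -- (i)
  have hcont : ContinuousOn h (Set.Ioc 0 1) :=
    fun x hx => ((hd x hx.1).continuousAt).continuousWithinAt
  have hmono : StrictMonoOn h (Set.Ioc 0 1) := by
    apply strictMonoOn_of_deriv_pos (convex_Ioc 0 1) hcont
    intro x hx
    rw [interior_Ioc] at hx
    rw [(hd x hx.1).deriv]
    exact hdpos x hx.1 hx.2.le
  have part1 : StrictMonoOn h (Set.Ioc 0 1) ∧
      (∀ x ∈ Set.Ioc (0:ℝ) 1, DifferentiableAt ℝ h x ∧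
        2 * Real.sqrt α - 3 / 2 ≤ deriv h x) ∧
      0 < 2 * Real.sqrt α - 3 / 2 := by
    refine ⟨hmono, fun x hx => ⟨(hd x hx.1).differentiableAt, ?_⟩, hD0⟩
    rw [(hd x hx.1).deriv]
    exact hdlb x hx.1 hx.2
  refine ⟨part1, ?_⟩
  -- the constant c
  set m : ℝ := min 1 β with hmdef
  have hm0 : 0 < m := lt_min one_pos hβ
  have hm1 : m ≤ 1 := min_le_left _ _
  have hmβ : m ≤ β := min_le_right _ _
  have hbase : 0 < β^2/(2*Real.sqrt α) := by positivity
  have hbase1 : β^2/(2*Real.sqrt α) < 1 := by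
    rw [div_lt_one (by positivity)]; nlinarith
  set c : ℝ := (β^2/(2*Real.sqrt α)) ^ ((2:ℝ)/3) with hcdef
  have hc0 : 0 < c := Real.rpow_pos_of_pos hbase _
  have hc1 : c < 1 := Real.rpow_lt_one hbase.le hbase1 (by norm_num)
  have hsc : 0 < Real.sqrt c := Real.sqrt_pos.2 hc0
  have hkey : c * Real.sqrt c = β^2/(2*Real.sqrt α) := by
    calc c * Real.sqrt c = c ^ (1:ℝ) * c ^ ((1:ℝ)/2) := by
          rw [Real.rpow_one, Real.sqrt_eq_rpow]
      _ = c ^ ((3:ℝ)/2) := by rw [← Real.rpow_add hc0]; norm_num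
      _ = (β^2/(2*Real.sqrt α)) ^ (((2:ℝ)/3) * ((3:ℝ)/2)) := by
          rw [Real.rpow_mul hbase.le]
      _ = β^2/(2*Real.sqrt α) := by norm_num
  have hkey2 : β^2 = 2*Real.sqrt α*(c*Real.sqrt c) := by
    rw [hkey]; field_simp
  have hceq : β ^ ((4:ℝ)/3) / (2 ^ ((2:ℝ)/3) * α ^ ((1:ℝ)/3)) = c := by
    rw [hcdef, Real.div_rpow (by positivity) (by positivity),
        Real.mul_rpow (by norm_num) hsα.le,
        Real.sqrt_eq_rpow, ← Real.rpow_natCast β 2,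
        ← Real.rpow_mul hβ.le, ← Real.rpow_mul hα0.le]
    norm_num
  have hbc : β ^ 2 / Real.sqrt c = 2 * Real.sqrt α * c := by
    rw [hkey2, mul_assoc, mul_assoc, mul_div_assoc, mul_div_assoc,
        mul_div_assoc, div_self hsc.ne', mul_one]
  have hhc : h c = -(β^2/(2*Real.sqrt α)) := by
    show 2 * Real.sqrt α * c - c * Real.sqrt c - β ^ 2 / Real.sqrt c = -(β^2/(2*Real.sqrt α))
    rw [hbc, hkey]
    ring
  have hhcneg : h c < 0 := by rw [hhc]; linarith [hbase]
  have hcm : c < m := by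
    rcases le_or_gt 1 β with h'|h'
    · calc c < 1 := hc1
        _ = m := by rw [hmdef, min_eq_left h']
    · have hmeq : m = β := by rw [hmdef, min_eq_right h'.le]
      rw [hmeq]
      by_contra hle
      push_neg at hle
      have hsb : 0 < Real.sqrt β := Real.sqrt_pos.2 hβ
      have hsb1 : Real.sqrt β < 1 := by
        rw [show (1:ℝ) = Real.sqrt 1 by simp]
        exact Real.sqrt_lt_sqrt hβ.le h'
      have hbb : Real.sqrt β * Real.sqrt β = β := Real.mul_self_sqrt hβ.le
      have h1 : β * Real.sqrt β ≤ c * Real.sqrt c :=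
        mul_le_mul hle (Real.sqrt_le_sqrt hle) hsb.le hc0.le
      rw [hkey] at h1
      have h2 : β * Real.sqrt β * (2 * Real.sqrt α) ≤ β ^ 2 :=
        (le_div_iff₀ (by positivity)).1 h1
      have h3 : β * Real.sqrt β * Real.sqrt β < β * Real.sqrt β * (2 * Real.sqrt α) :=
        mul_lt_mul_of_pos_left (by linarith) (mul_pos hβ hsb)
      have h4 : β * Real.sqrt β * Real.sqrt β = β ^ 2 := by
        rw [mul_assoc, hbb]; ring
      linarith
  have hhm : 0 < h m := by
    rcases le_or_gt 1 β with h'|h'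
    · have hmeq : m = 1 := by rw [hmdef, min_eq_left h']
      rw [hmeq]
      show 0 < 2 * Real.sqrt α * 1 - 1 * Real.sqrt 1 - β ^ 2 / Real.sqrt 1
      rw [Real.sqrt_one]
      have : β ^ 2 / 1 = β ^ 2 := div_one _
      nlinarith
    · have hmeq : m = β := by rw [hmdef, min_eq_right h'.le]
      rw [hmeq]
      show 0 < 2 * Real.sqrt α * β - β * Real.sqrt β - β ^ 2 / Real.sqrt β
      have hsb : 0 < Real.sqrt β := Real.sqrt_pos.2 hβ
      have hsb1 : Real.sqrt β < 1 := by
        rw [show (1:ℝ) = Real.sqrt 1 by simp]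
        exact Real.sqrt_lt_sqrt hβ.le h'
      have hbb : Real.sqrt β * Real.sqrt β = β := Real.mul_self_sqrt hβ.le
      have hq : β ^ 2 / Real.sqrt β = β * Real.sqrt β := by
        rw [div_eq_iff hsb.ne']; nlinarith
      rw [hq]
      nlinarith
  -- existence of root via IVT
  have hcontIcc : ContinuousOn h (Set.Icc c m) :=
    fun x hx => ((hd x (lt_of_lt_of_le hc0 hx.1)).continuousAt).continuousWithinAt
  have hivt := intermediate_value_Ioo hcm.le hcontIcc
  have h0mem : (0:ℝ) ∈ Set.Ioo (h c) (h m) := ⟨hhcneg, hhm⟩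
  obtain ⟨xs, hxsmem, hxs0⟩ := hivt h0mem
  have hxs_pos : 0 < xs := hc0.trans hxsmem.1
  have hxs_lt_m : xs < m := hxsmem.2
  have hxsIoc : xs ∈ Set.Ioc (0:ℝ) 1 := ⟨hxs_pos, (hxs_lt_m.trans_le hm1).le⟩
  refine ⟨xs, ⟨hxs_pos, hxs_lt_m⟩, hxs0, ?_, ?_, ?_, ?_, ?_⟩
  · -- uniqueness
    intro y hy hy0
    exact hmono.injOn ⟨hy.1, (hy.2.trans_le hm1).le⟩ hxsIoc (by rw [hy0, hxs0])
  · -- StrictAntiOn g (Ioc 0 xs)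
    apply strictAntiOn_of_deriv_neg (convex_Ioc 0 xs)
    · intro x hx
      exact ((mlmc_hasDerivAt_g α β x hx.1
        (lt_of_le_of_lt hx.2 (hxs_lt_m.trans_le hmβ))).continuousAt).continuousWithinAt
    · intro x hx
      rw [interior_Ioc] at hx
      have hx0 : 0 < x := hx.1
      have hx1 : x < 1 := (hx.2.trans hxs_lt_m).trans_le hm1
      have hxβ : x < β := (hx.2.trans hxs_lt_m).trans_le hmβ
      rw [(mlmc_hasDerivAt_g α β x hx0 hxβ).deriv]
      have hhx : h x < 0 := by
        have := hmono ⟨hx0, hx1.le⟩ hxsIoc hx.2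
        rw [hxs0] at this; exact this
      have hsx1 : Real.sqrt x < 1 := by
        rw [show (1:ℝ) = Real.sqrt 1 by simp]
        exact Real.sqrt_lt_sqrt hx0.le hx1
      have hnum : (Real.sqrt α - Real.sqrt x) *
          (2 * Real.sqrt α * x - x * Real.sqrt x - β ^ 2 / Real.sqrt x) < 0 :=
        mul_neg_of_pos_of_neg (by linarith) hhx
      have hden : (0:ℝ) < (β ^ 2 - x ^ 2) ^ 2 := by
        have : 0 < β ^ 2 - x ^ 2 := by nlinarith
        positivity
      exact div_neg_of_neg_of_pos hnum hden
  · -- StrictMonoOn g (Ico xs m)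
    apply strictMonoOn_of_deriv_pos (convex_Ico xs m)
    · intro x hx
      exact ((mlmc_hasDerivAt_g α β x (hxs_pos.trans_le hx.1)
        (hx.2.trans_le hmβ)).continuousAt).continuousWithinAt
    · intro x hx
      rw [interior_Ico] at hx
      have hx0 : 0 < x := hxs_pos.trans hx.1
      have hx1 : x < 1 := hx.2.trans_le hm1
      have hxβ : x < β := hx.2.trans_le hmβ
      rw [(mlmc_hasDerivAt_g α β x hx0 hxβ).deriv]
      have hhx : 0 < h x := by
        have := hmono hxsIoc ⟨hx0, hx1.le⟩ hx.1
        rw [hxs0] at this; exact this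
      have hsx1 : Real.sqrt x < 1 := by
        rw [show (1:ℝ) = Real.sqrt 1 by simp]
        exact Real.sqrt_lt_sqrt hx0.le hx1
      have hnum : 0 < (Real.sqrt α - Real.sqrt x) *
          (2 * Real.sqrt α * x - x * Real.sqrt x - β ^ 2 / Real.sqrt x) :=
        mul_pos (by linarith) hhx
      have hden : (0:ℝ) < (β ^ 2 - x ^ 2) ^ 2 := by
        have : 0 < β ^ 2 - x ^ 2 := by nlinarith
        positivity
      exact div_pos hnum hden
  · -- lower bound
    rw [hceq]; exact hxsmem.1
  · -- upper bound
    rw [hceq]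
    set D : ℝ := 2 * Real.sqrt α - 3 / 2 with hDdef
    set φ : ℝ → ℝ := fun x => h x - D * x with hφdef
    have hφd : ∀ x : ℝ, 0 < x → HasDerivAt φ
        (2 * Real.sqrt α - 3/2 * Real.sqrt x + β^2/(2 * x * Real.sqrt x) - D * 1) x :=
      fun x hx => (hd x hx).sub ((hasDerivAt_id x).const_mul D)
    have hφmono : StrictMonoOn φ (Set.Ioc 0 1) := by
      apply strictMonoOn_of_deriv_pos (convex_Ioc 0 1)
      · intro x hx
        exact ((hφd x hx.1).continuousAt).continuousWithinAt
      · intro x hx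
        rw [interior_Ioc] at hx
        rw [(hφd x hx.1).deriv]
        have hsx1 : Real.sqrt x < 1 := by
          rw [show (1:ℝ) = Real.sqrt 1 by simp]
          exact Real.sqrt_lt_sqrt hx.1.le hx.2
        have hsx0 : 0 < Real.sqrt x := Real.sqrt_pos.2 hx.1
        have h2 : 0 < β^2/(2 * x * Real.sqrt x) :=
          div_pos (pow_pos hβ 2) (mul_pos (mul_pos two_pos hx.1) hsx0)
        rw [hDdef]
        nlinarith
    have hlt : φ c < φ xs := hφmono ⟨hc0, hc1.le⟩ hxsIoc hxsmem.1
    have hφc : φ c = -(β^2/(2*Real.sqrt α)) - D * c := by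
      show h c - D * c = _
      rw [hhc]
    have hφxs : φ xs = - (D * xs) := by
      show h xs - D * xs = _
      rw [hxs0]; ring
    rw [hφc, hφxs] at hlt
    have h3 : xs - c < (β^2/(2*Real.sqrt α))/D := by
      rw [lt_div_iff₀ hD0]; nlinarith
    have h4 : β^2/(2*Real.sqrt α*D) = (β^2/(2*Real.sqrt α))/D := by rw [div_div]
    rw [h4]
    linarith
end
end

section
/- For all real numbers a, b > 0, one has √((a² + b)/2) ≤ a/2 + √((a/2)² + b/2) ≤ √( ((3 + √3)/4)·(a² + b) ). -/
open Real

/-- for all `a, b > 0`,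
`√((a² + b)/2) ≤ a/2 + √((a/2)² + b/2) ≤ √(((3 + √3)/4)(a² + b))`. -/
theorem rmse_orlicz_comparison (a b : ℝ) (ha : 0 < a) (hb : 0 < b) :
    Real.sqrt ((a ^ 2 + b) / 2) ≤ a / 2 + Real.sqrt ((a / 2) ^ 2 + b / 2) ∧
    a / 2 + Real.sqrt ((a / 2) ^ 2 + b / 2)
      ≤ Real.sqrt ((3 + Real.sqrt 3) / 4 * (a ^ 2 + b)) := by
  have hs : (0:ℝ) ≤ (a/2)^2 + b/2 := by positivity
  have hsq : Real.sqrt ((a/2)^2 + b/2) ^ 2 = (a/2)^2 + b/2 := Real.sq_sqrt hs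
  have hsnn : 0 ≤ Real.sqrt ((a/2)^2 + b/2) := Real.sqrt_nonneg _
  have h3 : Real.sqrt 3 ^ 2 = 3 := Real.sq_sqrt (by norm_num)
  have h3nn : 0 ≤ Real.sqrt 3 := Real.sqrt_nonneg 3
  constructor
  · have h := Real.sqrt_le_sqrt (show (a^2+b)/2 ≤ (a/2 + Real.sqrt ((a/2)^2 + b/2))^2 by
      nlinarith [mul_nonneg ha.le hsnn])
    rwa [Real.sqrt_sq (by positivity)] at h
  · have key : a * Real.sqrt ((a/2)^2 + b/2)
        ≤ (1 + Real.sqrt 3)/4 * (a^2 + b) := by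
      have h1 : a * Real.sqrt ((a/2)^2 + b/2)
          = Real.sqrt (a^2 * ((a/2)^2 + b/2)) := by
        rw [Real.sqrt_mul (sq_nonneg a), Real.sqrt_sq ha.le]
      have h2 : (1 + Real.sqrt 3)/4 * (a^2 + b)
          = Real.sqrt (((1 + Real.sqrt 3)/4 * (a^2 + b))^2) :=
        (Real.sqrt_sq (by positivity)).symm
      rw [h1, h2]
      apply Real.sqrt_le_sqrt
      nlinarith [h3, mul_nonneg h3nn (sq_nonneg (a^2)),
        mul_nonneg h3nn (mul_nonneg (sq_nonneg a) hb.le), sq_nonneg b,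
        mul_nonneg h3nn (sq_nonneg b)]
    have h := Real.sqrt_le_sqrt (show (a/2 + Real.sqrt ((a/2)^2 + b/2))^2
        ≤ (3 + Real.sqrt 3)/4 * (a^2+b) by nlinarith [key, hsq])
    rwa [Real.sqrt_sq (by positivity)] at h
end

section
/- Let G be a real centered Gaussian random variable with variance σ² > 0, and let δ ≥ 0. Then: (i) for every ν with 0 ≤ ν < 1/(2σ²), E[ exp( ν(δ + |G|)² ) ] ≤ exp( νδ²/(1 − 2νσ²) )·( 4νδσ/( √(2π)(1 − 2νσ²) ) + 1/√(1 − 2νσ²) ); (ii) for every ν with 0 ≤ ν ≤ 1/(4σ²), E[ exp( ν(δ + |G|)² ) ] ≤ exp( 2ν( δ² + (2/√π)·δσ + σ²·ln 2 ) ). -/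
open MeasureTheory ProbabilityTheory Real

private lemma exp_core' (σ ν δ x : ℝ) (hσ : 0 < σ) (h1 : 0 < 1 - 2*ν*σ^2) :
    gaussianPDFReal 0 (Real.toNNReal (σ^2)) x * Real.exp (ν*(δ+|x|)^2)
      = (Real.sqrt (2*π*σ^2))⁻¹ * Real.exp (ν*δ^2/(1-2*ν*σ^2)) *
        Real.exp (-((1/(2*σ^2) - ν)*(|x| - 2*ν*δ*σ^2/(1-2*ν*σ^2))^2)) := by
  have hσ2 : (0:ℝ) < σ^2 := by positivity
  rw [gaussianPDFReal, Real.coe_toNNReal _ hσ2.le]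
  conv_lhs => rw [mul_assoc, ← Real.exp_add]
  conv_rhs => rw [mul_assoc, ← Real.exp_add]
  congr 1
  have hx2 : |x|^2 = x^2 := sq_abs x
  set t := |x| with ht
  have key : -(x - 0)^2 / (2*σ^2) + ν*(δ + t)^2
      = ν*δ^2/(1 - 2*ν*σ^2) + -((1/(2*σ^2) - ν)*(t - 2*ν*δ*σ^2/(1-2*ν*σ^2))^2) := by
    rw [sub_zero, ← hx2]
    have h1' : (1 - 2*ν*σ^2) ≠ 0 := h1.ne'
    field_simp [show (1:ℝ) - 2*σ^2*ν ≠ 0 by rw [mul_right_comm]; exact h1']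
    ring
  exact congrArg rexp key

private lemma integrable_shift' (a m : ℝ) (ha : 0 < a) :
    Integrable (fun x : ℝ => Real.exp (-(a*(x-m)^2))) := by
  have h : Integrable (fun x : ℝ => Real.exp (-a*x^2)) := integrable_exp_neg_mul_sq ha
  have := h.comp_sub_right m
  simpa [neg_mul] using this

private lemma half_line' (a m : ℝ) (ha : 0 < a) (hm : 0 ≤ m) :
    ∫ x in Set.Ioi (0:ℝ), Real.exp (-(a*(x-m)^2)) ≤ m + Real.sqrt (π/a)/2 := by
  have hint : Integrable (fun x : ℝ => Real.exp (-(a*x^2))) := by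
    simpa [neg_mul] using integrable_exp_neg_mul_sq ha
  have hshift : ∫ x in Set.Ioi (0:ℝ), Real.exp (-(a*(x-m)^2))
      = ∫ u in Set.Ioi (-m), Real.exp (-(a*u^2)) := by
    have hmp := (measurePreserving_add_right (volume : Measure ℝ) (-m)).setIntegral_preimage_emb
      (MeasurableEquiv.addRight (-m)).measurableEmbedding
      (fun u => Real.exp (-(a*u^2))) (Set.Ioi (-m))
    have hpre : (fun x : ℝ => x + -m) ⁻¹' (Set.Ioi (-m)) = Set.Ioi (0:ℝ) := by
      ext y; simp
    rw [← hmp, hpre]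
    simp_rw [sub_eq_add_neg]
  rw [hshift]
  have hsplit : Set.Ioc (-m) 0 ∪ Set.Ioi (0:ℝ) = Set.Ioi (-m) :=
    Set.Ioc_union_Ioi_eq_Ioi (neg_nonpos.mpr hm)
  rw [← hsplit, setIntegral_union (Set.Ioc_disjoint_Ioi le_rfl) measurableSet_Ioi
    hint.integrableOn hint.integrableOn]
  have h1 : ∫ u in Set.Ioc (-m) 0, Real.exp (-(a*u^2)) ≤ m := by
    have hb : ∫ u in Set.Ioc (-m) 0, Real.exp (-(a*u^2)) ≤ ∫ _u in Set.Ioc (-m) 0, (1:ℝ) := by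
      refine setIntegral_mono_on hint.integrableOn ((integrableOn_const_iff (C := (1:ℝ))).mpr ?_)
        measurableSet_Ioc (fun x _ => ?_)
      · right; exact measure_Ioc_lt_top
      · exact Real.exp_le_one_iff.mpr (neg_nonpos.mpr (by positivity))
    rw [setIntegral_const] at hb
    simpa [Real.volume_real_Ioc_of_le (neg_nonpos.mpr hm), ENNReal.toReal_ofReal hm] using hb
  have h2 : ∫ u in Set.Ioi (0:ℝ), Real.exp (-(a*u^2)) = Real.sqrt (π/a)/2 := by
    simpa [neg_mul] using integral_gaussian_Ioi a
  linarith

private lemma abs_integrable' (σ ν δ : ℝ) (hσ : 0 < σ) (hν : 0 ≤ ν) (hδ : 0 ≤ δ)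
    (h1 : 0 < 1 - 2*ν*σ^2) :
    Integrable (fun x : ℝ =>
      gaussianPDFReal 0 (Real.toNNReal (σ^2)) x * Real.exp (ν*(δ+|x|)^2)) := by
  have ha : (0:ℝ) < 1/(2*σ^2) - ν := by
    rw [sub_pos, lt_div_iff₀ (by positivity)]; nlinarith
  set a := 1/(2*σ^2) - ν
  set m := 2*ν*δ*σ^2/(1-2*ν*σ^2) with hmdef
  have hm : 0 ≤ m := by positivity
  have hcore : (fun x : ℝ => gaussianPDFReal 0 (Real.toNNReal (σ^2)) x
      * Real.exp (ν*(δ+|x|)^2))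
      = fun x : ℝ => (Real.sqrt (2*π*σ^2))⁻¹ * Real.exp (ν*δ^2/(1-2*ν*σ^2)) *
        Real.exp (-(a*(|x| - m)^2)) := by
    funext x; exact exp_core' σ ν δ x hσ h1
  rw [hcore]
  refine Integrable.const_mul ?_ _
  have hgi : Integrable (fun x : ℝ => Real.exp (-(a*(x-m)^2)) + Real.exp (-(a*(x+m)^2))) := by
    have h2 := integrable_shift' a (-m) ha
    simp only [sub_neg_eq_add] at h2
    exact (integrable_shift' a m ha).add h2
  refine hgi.mono' ?_ (ae_of_all _ fun x => ?_)
  · exact (Continuous.rexp (by continuity)).aestronglyMeasurable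
  · rw [Real.norm_eq_abs, abs_of_pos (Real.exp_pos _)]
    rcases abs_cases x with ⟨h, _⟩ | ⟨h, _⟩
    · rw [h]
      exact le_add_of_nonneg_right (Real.exp_pos _).le
    · rw [h]
      have : (-x - m)^2 = (x + m)^2 := by ring
      rw [this]
      exact le_add_of_nonneg_left (Real.exp_pos _).le

private lemma main_bound' (σ ν δ : ℝ) (hσ : 0 < σ) (hν : 0 ≤ ν) (hδ : 0 ≤ δ)
    (h1 : 0 < 1 - 2*ν*σ^2) :
    ∫ x : ℝ, gaussianPDFReal 0 (Real.toNNReal (σ^2)) x * Real.exp (ν*(δ+|x|)^2)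
      ≤ Real.exp (ν*δ^2/(1-2*ν*σ^2)) *
          (4*ν*δ*σ/(Real.sqrt (2*π)*(1-2*ν*σ^2)) + 1/Real.sqrt (1-2*ν*σ^2)) := by
  have hσ2 : (0:ℝ) < σ^2 := by positivity
  have ha : (0:ℝ) < 1/(2*σ^2) - ν := by
    rw [sub_pos, lt_div_iff₀ (by positivity)]; nlinarith
  set a := 1/(2*σ^2) - ν with hadef
  set m := 2*ν*δ*σ^2/(1-2*ν*σ^2) with hmdef
  have hm : 0 ≤ m := by positivity
  set c := (Real.sqrt (2*π*σ^2))⁻¹ with hcdef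
  set K := ν*δ^2/(1-2*ν*σ^2) with hKdef
  have hc : 0 < c := by
    rw [hcdef]; positivity
  have hcore : ∀ x : ℝ, gaussianPDFReal 0 (Real.toNNReal (σ^2)) x
      * Real.exp (ν*(δ+|x|)^2) = c * Real.exp K * Real.exp (-(a*(|x| - m)^2)) :=
    fun x => exp_core' σ ν δ x hσ h1
  rw [integral_congr_ae (ae_of_all _ hcore)]
  rw [integral_const_mul]
  have habs : ∫ x : ℝ, Real.exp (-(a*(|x| - m)^2))
      = 2 * ∫ x in Set.Ioi (0:ℝ), Real.exp (-(a*(x - m)^2)) :=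
    integral_comp_abs (f := fun t => Real.exp (-(a*(t - m)^2)))
  rw [habs]
  have hbd : 2 * ∫ x in Set.Ioi (0:ℝ), Real.exp (-(a*(x - m)^2))
      ≤ 2*m + Real.sqrt (π/a) := by
    have := half_line' a m ha hm
    linarith
  have hfinal : c * Real.exp K * (2*m + Real.sqrt (π/a))
      = Real.exp K * (4*ν*δ*σ/(Real.sqrt (2*π)*(1-2*ν*σ^2)) + 1/Real.sqrt (1-2*ν*σ^2)) := by
    have hsq : Real.sqrt (2*π*σ^2) = Real.sqrt (2*π) * σ := by
      rw [Real.sqrt_mul (by positivity) (σ^2), Real.sqrt_sq hσ.le]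
    have hπa : π/a = (2*π*σ^2)/(1-2*ν*σ^2) := by
      rw [div_eq_div_iff ha.ne' h1.ne']
      show π * (1 - 2*ν*σ^2) = 2*π*σ^2 * (1/(2*σ^2) - ν)
      field_simp
    have hsqa : Real.sqrt (π/a) = Real.sqrt (2*π) * σ / Real.sqrt (1-2*ν*σ^2) := by
      rw [hπa, Real.sqrt_div (by positivity), hsq]
    rw [hcdef, hsq, hsqa, hmdef]
    have h2π : Real.sqrt (2*π) ≠ 0 := by positivity
    have hs1 : Real.sqrt (1-2*ν*σ^2) ≠ 0 := by positivity
    field_simp [h1.ne']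
    ring
  calc c * Real.exp K * (2 * ∫ x in Set.Ioi (0:ℝ), Real.exp (-(a*(x - m)^2)))
      ≤ c * Real.exp K * (2*m + Real.sqrt (π/a)) := by
        exact mul_le_mul_of_nonneg_left hbd (by positivity)
    _ = _ := hfinal

private lemma part2_real' (σ ν δ : ℝ) (hσ : 0 < σ) (hν : 0 ≤ ν) (hδ : 0 ≤ δ)
    (hle : ν ≤ 1/(4*σ^2)) :
    Real.exp (ν*δ^2/(1-2*ν*σ^2)) *
        (4*ν*δ*σ/(Real.sqrt (2*π)*(1-2*ν*σ^2)) + 1/Real.sqrt (1-2*ν*σ^2))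
      ≤ Real.exp (2*ν*(δ^2 + 2/Real.sqrt π*δ*σ + σ^2*Real.log 2)) := by
  have hσ2 : (0:ℝ) < σ^2 := by positivity
  set x := 2*ν*σ^2 with hxdef
  have hx0 : 0 ≤ x := by positivity
  have hx : x ≤ 1/2 := by
    rw [hxdef]
    rw [le_div_iff₀ (by positivity : (0:ℝ) < 4*σ^2)] at hle
    nlinarith
  have h1 : (0:ℝ) < 1 - x := by linarith
  have h1half : (1:ℝ)/2 ≤ 1 - x := by linarith
  have hconv : Real.exp (-(2*x*Real.log 2)) ≤ 1 - x := by
    have h2x0 : (0:ℝ) ≤ 2*x := by linarith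
    have h2x1 : (0:ℝ) ≤ 1 - 2*x := by linarith
    have := convexOn_exp.2 (Set.mem_univ (-Real.log 2)) (Set.mem_univ (0:ℝ))
      h2x0 h2x1 (by ring)
    simp only [smul_eq_mul, mul_zero, add_zero, Real.exp_zero, mul_one] at this
    rw [Real.exp_neg, Real.exp_log two_pos] at this
    calc Real.exp (-(2*x*Real.log 2)) = Real.exp (2*x * -Real.log 2) := by ring_nf
      _ ≤ 2*x * (2:ℝ)⁻¹ + (1 - 2*x) := this
      _ = 1 - x := by ring
  have hsqx : (0:ℝ) < Real.sqrt (1-x) := Real.sqrt_pos.mpr h1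
  have h2 : Real.exp (-(x*Real.log 2)) ≤ Real.sqrt (1-x) := by
    have hsq : Real.exp (-(x*Real.log 2))^2 = Real.exp (-(2*x*Real.log 2)) := by
      rw [sq, ← Real.exp_add]; ring_nf
    calc Real.exp (-(x*Real.log 2)) = Real.sqrt (Real.exp (-(x*Real.log 2))^2) :=
          (Real.sqrt_sq (Real.exp_pos _).le).symm
      _ = Real.sqrt (Real.exp (-(2*x*Real.log 2))) := by rw [hsq]
      _ ≤ Real.sqrt (1-x) := Real.sqrt_le_sqrt hconv
  have h3 : 1/Real.sqrt (1-x) ≤ Real.exp (x*Real.log 2) := by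
    rw [div_le_iff₀ hsqx]
    calc (1:ℝ) = Real.exp (x*Real.log 2) * Real.exp (-(x*Real.log 2)) := by
          rw [← Real.exp_add]; simp
      _ ≤ Real.exp (x*Real.log 2) * Real.sqrt (1-x) :=
          mul_le_mul_of_nonneg_left h2 (Real.exp_pos _).le
  have hπ2 : Real.sqrt (2*π) * Real.sqrt (1/2) = Real.sqrt π := by
    rw [← Real.sqrt_mul (by positivity)]
    congr 1
    ring
  have hsx_half : Real.sqrt (1/2) ≤ Real.sqrt (1-x) := Real.sqrt_le_sqrt h1half
  have h5 : 4*ν*δ*σ/(Real.sqrt (2*π)*(1-x))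
      ≤ 4*ν*δ*σ/Real.sqrt π * Real.exp (x*Real.log 2) := by
    have hkey : 1/(Real.sqrt (2*π)*(1-x)) ≤ Real.exp (x*Real.log 2)/Real.sqrt π := by
      have hπpos : (0:ℝ) < Real.sqrt π := Real.sqrt_pos.mpr pi_pos
      have step1 : Real.sqrt π * Real.sqrt (1-x) ≤ Real.sqrt (2*π) * (1-x) := by
        have : Real.sqrt (2*π) * (1-x) = Real.sqrt (2*π) * Real.sqrt (1-x) * Real.sqrt (1-x) := by
          rw [mul_assoc, Real.mul_self_sqrt h1.le]
        rw [this]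
        refine mul_le_mul_of_nonneg_right ?_ hsqx.le
        calc Real.sqrt π = Real.sqrt (2*π) * Real.sqrt (1/2) := hπ2.symm
          _ ≤ Real.sqrt (2*π) * Real.sqrt (1-x) :=
            mul_le_mul_of_nonneg_left hsx_half (Real.sqrt_nonneg _)
      calc 1/(Real.sqrt (2*π)*(1-x)) ≤ 1/(Real.sqrt π * Real.sqrt (1-x)) := by
            apply one_div_le_one_div_of_le (by positivity) step1
        _ = (1/Real.sqrt π) * (1/Real.sqrt (1-x)) := by ring
        _ ≤ (1/Real.sqrt π) * Real.exp (x*Real.log 2) :=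
            mul_le_mul_of_nonneg_left h3 (by positivity)
        _ = Real.exp (x*Real.log 2)/Real.sqrt π := by ring
    calc 4*ν*δ*σ/(Real.sqrt (2*π)*(1-x)) = 4*ν*δ*σ * (1/(Real.sqrt (2*π)*(1-x))) := by ring
      _ ≤ 4*ν*δ*σ * (Real.exp (x*Real.log 2)/Real.sqrt π) :=
          mul_le_mul_of_nonneg_left hkey (by positivity)
      _ = 4*ν*δ*σ/Real.sqrt π * Real.exp (x*Real.log 2) := by ring
  set S := 4*ν*δ*σ/Real.sqrt π with hSdef
  have hS0 : 0 ≤ S := by positivity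
  have hbr : 4*ν*δ*σ/(Real.sqrt (2*π)*(1-x)) + 1/Real.sqrt (1-x)
      ≤ Real.exp (x*Real.log 2 + S) := by
    calc 4*ν*δ*σ/(Real.sqrt (2*π)*(1-x)) + 1/Real.sqrt (1-x)
        ≤ S * Real.exp (x*Real.log 2) + Real.exp (x*Real.log 2) := add_le_add h5 h3
      _ = Real.exp (x*Real.log 2) * (S + 1) := by ring
      _ ≤ Real.exp (x*Real.log 2) * Real.exp S := by
          refine mul_le_mul_of_nonneg_left ?_ (Real.exp_pos _).le
          linarith [Real.add_one_le_exp S]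
      _ = Real.exp (x*Real.log 2 + S) := (Real.exp_add _ _).symm
  have hK : ν*δ^2/(1-x) ≤ 2*ν*δ^2 := by
    rw [div_le_iff₀ h1]
    nlinarith [mul_nonneg hν (sq_nonneg δ)]
  calc Real.exp (ν*δ^2/(1-x)) * (4*ν*δ*σ/(Real.sqrt (2*π)*(1-x)) + 1/Real.sqrt (1-x))
      ≤ Real.exp (2*ν*δ^2) * Real.exp (x*Real.log 2 + S) := by
        refine mul_le_mul (Real.exp_le_exp.mpr hK) hbr ?_ (Real.exp_pos _).le
        positivity
    _ = Real.exp (2*ν*δ^2 + (x*Real.log 2 + S)) := (Real.exp_add _ _).symm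
    _ = Real.exp (2*ν*(δ^2 + 2/Real.sqrt π*δ*σ + σ^2*Real.log 2)) := by
        congr 1
        rw [hSdef, hxdef]
        ring

private lemma reduction' {Ω : Type*} [MeasureSpace Ω] [IsProbabilityMeasure (ℙ : Measure Ω)]
    (σ ν δ : ℝ) (hσ : 0 < σ) (G : Ω → ℝ)
    (hG : Measure.map G (ℙ : Measure Ω) = gaussianReal 0 (Real.toNNReal (σ ^ 2))) :
    ∫⁻ ω, ENNReal.ofReal (Real.exp (ν * (δ + |G ω|) ^ 2)) ∂(ℙ : Measure Ω)
      = ∫⁻ x, ENNReal.ofReal (gaussianPDFReal 0 (Real.toNNReal (σ^2)) x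
          * Real.exp (ν * (δ + |x|) ^ 2)) := by
  have hσ2 : (0:ℝ) < σ^2 := by positivity
  have hv : Real.toNNReal (σ^2) ≠ 0 := by
    simp only [ne_eq, Real.toNNReal_eq_zero, not_le]
    exact hσ2
  have hGae : AEMeasurable G (ℙ : Measure Ω) := by
    by_contra h
    rw [Measure.map_of_not_aemeasurable h] at hG
    exact (IsProbabilityMeasure.ne_zero (gaussianReal 0 (Real.toNNReal (σ^2)))) hG.symm
  have hfm : Measurable fun x : ℝ => ENNReal.ofReal (Real.exp (ν * (δ + |x|) ^ 2)) := by
    apply Measurable.ennreal_ofReal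
    exact (Real.continuous_exp.comp (by continuity)).measurable
  rw [← lintegral_map' hfm.aemeasurable hGae, hG,
    gaussianReal_of_var_ne_zero 0 hv,
    lintegral_withDensity_eq_lintegral_mul _ (measurable_gaussianPDF 0 _) hfm]
  congr 1 with x
  simp only [Pi.mul_apply, gaussianPDF]
  rw [← ENNReal.ofReal_mul (gaussianPDFReal_nonneg 0 _ x)]

/-- Lemma A.1, core Gaussian computation: for `G ∼ N(0,σ²)` with `σ > 0`
and `δ ≥ 0`, (i) for `0 ≤ ν < 1/(2σ²)`,
`E[exp(ν(δ+|G|)²)] ≤ exp(νδ²/(1−2νσ²))·(4νδσ/(√(2π)(1−2νσ²)) + 1/√(1−2νσ²))`;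
(ii) for `0 ≤ ν ≤ 1/(4σ²)`, `E[exp(ν(δ+|G|)²)] ≤ exp(2ν(δ² + (2/√π)δσ + σ² ln 2))`. -/
theorem gaussian_abs_shift_mgf
    {Ω : Type*} [MeasureSpace Ω] [IsProbabilityMeasure (ℙ : Measure Ω)]
    (σ : ℝ) (hσ : 0 < σ) (G : Ω → ℝ)
    (hG : Measure.map G (ℙ : Measure Ω) = gaussianReal 0 (Real.toNNReal (σ ^ 2)))
    (δ : ℝ) (hδ : 0 ≤ δ) :
    (∀ ν : ℝ, 0 ≤ ν → ν < 1 / (2 * σ ^ 2) →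
      ∫⁻ ω, ENNReal.ofReal (Real.exp (ν * (δ + |G ω|) ^ 2)) ∂(ℙ : Measure Ω)
        ≤ ENNReal.ofReal
            (Real.exp (ν * δ ^ 2 / (1 - 2 * ν * σ ^ 2)) *
              (4 * ν * δ * σ / (Real.sqrt (2 * π) * (1 - 2 * ν * σ ^ 2))
                + 1 / Real.sqrt (1 - 2 * ν * σ ^ 2)))) ∧
    (∀ ν : ℝ, 0 ≤ ν → ν ≤ 1 / (4 * σ ^ 2) →
      ∫⁻ ω, ENNReal.ofReal (Real.exp (ν * (δ + |G ω|) ^ 2)) ∂(ℙ : Measure Ω)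
        ≤ ENNReal.ofReal
            (Real.exp (2 * ν * (δ ^ 2 + 2 / Real.sqrt π * δ * σ + σ ^ 2 * Real.log 2)))) := by
  have hσ2 : (0:ℝ) < σ^2 := by positivity
  have main : ∀ ν : ℝ, 0 ≤ ν → ν < 1 / (2 * σ ^ 2) →
      ∫⁻ ω, ENNReal.ofReal (Real.exp (ν * (δ + |G ω|) ^ 2)) ∂(ℙ : Measure Ω)
        ≤ ENNReal.ofReal
            (Real.exp (ν * δ ^ 2 / (1 - 2 * ν * σ ^ 2)) *
              (4 * ν * δ * σ / (Real.sqrt (2 * π) * (1 - 2 * ν * σ ^ 2))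
                + 1 / Real.sqrt (1 - 2 * ν * σ ^ 2))) := by
    intro ν hν hlt
    have h1 : (0:ℝ) < 1 - 2*ν*σ^2 := by
      rw [lt_div_iff₀ (by positivity)] at hlt
      nlinarith
    rw [reduction' σ ν δ hσ G hG]
    rw [← ofReal_integral_eq_lintegral_ofReal (abs_integrable' σ ν δ hσ hν hδ h1)
      (ae_of_all _ fun x => mul_nonneg (gaussianPDFReal_nonneg 0 _ x) (Real.exp_pos _).le)]
    exact ENNReal.ofReal_le_ofReal (main_bound' σ ν δ hσ hν hδ h1)
  refine ⟨main, fun ν hν hle => ?_⟩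
  have hlt : ν < 1 / (2 * σ ^ 2) := by
    rw [le_div_iff₀ (by positivity : (0:ℝ) < 4*σ^2)] at hle
    rw [lt_div_iff₀ (by positivity)]
    nlinarith
  exact (main ν hν hlt).trans
    (ENNReal.ofReal_le_ofReal (part2_real' σ ν δ hσ hν hδ hle))
end
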